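/- Let P be a finite bichromatic point set in the plane in general position with b blue points and b − 3t red points, where t is a nonnegative integer with t ≤ b/3. Then there exists a set of at most ⌈(b − t)/2⌉ triangles such that every blue point of P is contained in some triangle and no triangle contains a red point of P. -/

import Mathlib

abbrev Pt := ℝ × ℝ

def GenPos (P : Finset Pt) : Prop :=
  ∀ p ∈ P, ∀ q ∈ P, ∀ r ∈ P, p ≠ q → p ≠ r → q ≠ r → ¬ Collinear ℝ ({p, q, r} : Set Pt)

namespace Stmt4Aux

lemma genPos_mono {P Q : Finset Pt} (h : P ⊆ Q) (hg : GenPos Q) : GenPos P :=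
  fun p hp q hq r hr h1 h2 h3 => hg p (h hp) q (h hq) r (h hr) h1 h2 h3

noncomputable def Fc (c : ℝ) : Pt →ₗ[ℝ] ℝ := LinearMap.snd ℝ ℝ ℝ + c • LinearMap.fst ℝ ℝ ℝ

lemma Fc_apply (c : ℝ) (p : Pt) : Fc c p = p.2 + c * p.1 := rfl

lemma collinear_triple_of_smul {v q w : Pt} {t : ℝ} (h : w - v = t • (q - v)) :
    Collinear ℝ ({v, q, w} : Set Pt) := by
  rw [collinear_iff_of_mem (Set.mem_insert v _)]
  refine ⟨q - v, fun p hp => ?_⟩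
  simp only [Set.mem_insert_iff, Set.mem_singleton_iff] at hp
  rcases hp with rfl | rfl | rfl
  · exact ⟨0, by simp⟩
  · exact ⟨1, by simp⟩
  · exact ⟨t, by rw [← h]; simp [vadd_eq_add]⟩

lemma collinear_of_cross (c : ℝ) {v q w : Pt} (hq : Fc c q - Fc c v ≠ 0)
    (h : (w.1 - v.1) * (Fc c q - Fc c v) = (q.1 - v.1) * (Fc c w - Fc c v)) :
    Collinear ℝ ({v, q, w} : Set Pt) := by
  apply collinear_triple_of_smul (t := (Fc c w - Fc c v) / (Fc c q - Fc c v))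
  simp only [Fc_apply] at h hq ⊢
  refine Prod.ext ?_ ?_
  · show w.1 - v.1 = _ * (q - v).1
    have h1 : (q - v).1 = q.1 - v.1 := rfl
    rw [h1]
    rw [div_mul_eq_mul_div, eq_div_iff hq]
    linear_combination h
  · show w.2 - v.2 = _ * (q - v).2
    have h1 : (q - v).2 = q.2 - v.2 := rfl
    rw [h1]
    rw [div_mul_eq_mul_div, eq_div_iff hq]
    linear_combination (-c) * h

lemma exists_good_triple (c : ℝ) (B R : Finset Pt) (hd : Disjoint B R)
    (hgp : GenPos (B ∪ R)) (hinj : Set.InjOn (fun p => Fc c p) ↑B)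
    (hBR : R.card + 3 ≤ B.card) :
    ∃ p ∈ B, ∃ q ∈ B, ∃ r ∈ B, p ≠ q ∧ p ≠ r ∧ q ≠ r ∧
      ∀ w ∈ R, w ∉ convexHull ℝ ({p, q, r} : Set Pt) := by
  have hBne : B.Nonempty := Finset.card_pos.1 (by omega)
  obtain ⟨v, hv, hvmin⟩ := B.exists_min_image (fun p => Fc c p) hBne
  set Q := B.erase v with hQdef
  have hQB : Q ⊆ B := Finset.erase_subset _ _
  have hQv : v ∉ Q := Finset.notMem_erase _ _
  have hQcard : Q.card = B.card - 1 := Finset.card_erase_of_mem hv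
  have hΔ : ∀ q ∈ Q, 0 < Fc c q - Fc c v := by
    intro q hq
    have hle := hvmin q (hQB hq)
    have hne : Fc c q ≠ Fc c v := by
      intro h
      exact (Finset.mem_erase.1 hq).1 (hinj (hQB hq) hv h)
    cases lt_or_eq_of_le hle with
    | inl h => linarith
    | inr h => exact absurd h.symm hne
  set σ : Pt → ℝ := fun p => (p.1 - v.1) / (Fc c p - Fc c v) with hσdef
  -- general-position facts
  have hWB : ∀ w ∈ R, w ∉ B := fun w hw hwB => (Finset.disjoint_left.1 hd hwB) hw
  have hcol : ∀ q ∈ Q, ∀ w : Pt, w ∈ B ∪ R → w ≠ v → w ≠ q →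
      (w.1 - v.1) * (Fc c q - Fc c v) = (q.1 - v.1) * (Fc c w - Fc c v) → False := by
    intro q hq w hw hwv hwq h
    have hvq : v ≠ q := fun h' => hQv (h' ▸ hq)
    exact hgp v (Finset.mem_union_left _ hv) q (Finset.mem_union_left _ (hQB hq)) w hw
      hvq (Ne.symm hwv) (Ne.symm hwq) (collinear_of_cross c (ne_of_gt (hΔ q hq)) h)
  have hσinj : Set.InjOn σ ↑Q := by
    intro q hq q' hq' h
    by_contra hne
    rw [Finset.mem_coe] at hq hq'
    have h' : (q'.1 - v.1) * (Fc c q - Fc c v) = (q.1 - v.1) * (Fc c q' - Fc c v) := by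
      have h1 := hΔ q hq
      have h2 := hΔ q' hq'
      rw [hσdef] at h
      simp only at h
      field_simp at h
      linarith
    have hq'v : q' ≠ v := (Finset.mem_erase.1 hq').1
    exact hcol q hq q' (Finset.mem_union_left _ (hQB hq')) hq'v (Ne.symm hne) h'
  set A := Q.image σ with hAdef
  have hAcard : A.card = Q.card := Finset.card_image_of_injOn hσinj
  set m := Q.card with hmdef
  have hm : R.card + 2 ≤ m := by omega
  let ord := A.orderIsoOfFin (by rw [hAcard])
  set a : Fin m → ℝ := fun i => (ord i : ℝ) with hadef
  have ha : StrictMono a := fun i j h => ord.strictMono h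
  have he' : ∀ i : Fin m, ∃ q ∈ Q, σ q = a i := by
    intro i
    exact Finset.mem_image.1 (ord i).2
  choose e he hσe using he'
  -- the key geometric step
  have hkey : ∀ i j : Fin m, i < j → ∀ w ∈ R,
      w ∈ convexHull ℝ ({v, e i, e j} : Set Pt) → a i < σ w ∧ σ w < a j := by
    intro i j hij w hwR hmem
    have hwB : w ∉ B := hWB w hwR
    have hwv : w ≠ v := fun h => hwB (h ▸ hv)
    have hwi : w ≠ e i := fun h => hwB (h ▸ hQB (he i))
    have hwj : w ≠ e j := fun h => hwB (h ▸ hQB (he j))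
    have hwU : w ∈ B ∪ R := Finset.mem_union_right _ hwR
    rw [convexHull_insert ⟨e i, Set.mem_insert _ _⟩, mem_convexJoin] at hmem
    obtain ⟨x0, hx0, z, hz, hwz⟩ := hmem
    rw [convexHull_pair] at hz
    obtain ⟨β, β', hβ, hβ', hββ, hzeq⟩ := hz
    obtain ⟨α, α', hα, hα', hαα, hweq⟩ := hwz
    rw [Set.mem_singleton_iff] at hx0
    rw [hx0] at hweq
    obtain ⟨Fi, hFi⟩ : ∃ x, x = Fc c (e i) - Fc c v := ⟨_, rfl⟩
    obtain ⟨Fj, hFj⟩ : ∃ x, x = Fc c (e j) - Fc c v := ⟨_, rfl⟩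
    obtain ⟨Gi, hGi⟩ : ∃ x, x = (e i).1 - v.1 := ⟨_, rfl⟩
    obtain ⟨Gj, hGj⟩ : ∃ x, x = (e j).1 - v.1 := ⟨_, rfl⟩
    have hFi0 : 0 < Fi := hFi ▸ hΔ _ (he i)
    have hFj0 : 0 < Fj := hFj ▸ hΔ _ (he j)
    obtain ⟨b, hb⟩ : ∃ x, x = α' * β := ⟨_, rfl⟩
    obtain ⟨c2, hc2⟩ : ∃ x, x = α' * β' := ⟨_, rfl⟩
    have hb0 : 0 ≤ b := hb ▸ mul_nonneg hα' hβ
    have hc20 : 0 ≤ c2 := hc2 ▸ mul_nonneg hα' hβ'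
    have hw1 : w.1 - v.1 = b * Gi + c2 * Gj := by
      have h1 : w.1 = α * v.1 + α' * (β * (e i).1 + β' * (e j).1) := by
        rw [← hweq, ← hzeq]
        simp only [Prod.fst_add, Prod.smul_fst, smul_eq_mul]
      rw [h1, hb, hc2, hGi, hGj]
      linear_combination v.1 * hαα + α' * v.1 * hββ
    have hwF : Fc c w - Fc c v = b * Fi + c2 * Fj := by
      have h1 : Fc c w = α * Fc c v + α' * (β * Fc c (e i) + β' * Fc c (e j)) := by
        rw [← hweq, ← hzeq]
        simp only [map_add, map_smul, smul_eq_mul]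
      rw [h1, hb, hc2, hFi, hFj]
      linear_combination (Fc c v) * hαα + α' * (Fc c v) * hββ
    have hai : a i = Gi / Fi := by
      rw [← hσe i]
      show ((e i).1 - v.1) / (Fc c (e i) - Fc c v) = Gi / Fi
      rw [hGi, hFi]
    have haj : a j = Gj / Fj := by
      rw [← hσe j]
      show ((e j).1 - v.1) / (Fc c (e j) - Fc c v) = Gj / Fj
      rw [hGj, hFj]
    -- not both zero
    have hbc : ¬ (b = 0 ∧ c2 = 0) := by
      rintro ⟨h1, h2⟩
      rw [hb] at h1
      rw [hc2] at h2
      have hα'0 : α' = 0 := by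
        rcases mul_eq_zero.1 h1 with h | h
        · exact h
        · rcases mul_eq_zero.1 h2 with h' | h'
          · exact h'
          · exfalso; rw [h, h'] at hββ; norm_num at hββ
      have hwv' : w = v := by
        rw [← hweq, hα'0]
        have hα1 : α = 1 := by linarith
        rw [hα1]
        simp
      exact hwv hwv'
    have hbpos : b ≠ 0 := by
      intro hb0'
      apply hcol (e j) (he j) w hwU hwv hwj
      have e1 : w.1 - v.1 = c2 * Gj := by rw [hw1, hb0']; ring
      have e2 : Fc c w - Fc c v = c2 * Fj := by rw [hwF, hb0']; ring
      have e3 : (e j).1 - v.1 = Gj := hGj.symm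
      have e4 : Fc c (e j) - Fc c v = Fj := hFj.symm
      rw [e1, e2, e3, e4]
      ring
    have hcpos : c2 ≠ 0 := by
      intro hc0'
      apply hcol (e i) (he i) w hwU hwv hwi
      have e1 : w.1 - v.1 = b * Gi := by rw [hw1, hc0']; ring
      have e2 : Fc c w - Fc c v = b * Fi := by rw [hwF, hc0']; ring
      have e3 : (e i).1 - v.1 = Gi := hGi.symm
      have e4 : Fc c (e i) - Fc c v = Fi := hFi.symm
      rw [e1, e2, e3, e4]
      ring
    have hbp : 0 < b := lt_of_le_of_ne hb0 (Ne.symm hbpos)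
    have hcp : 0 < c2 := lt_of_le_of_ne hc20 (Ne.symm hcpos)
    have hD : 0 < b * Fi + c2 * Fj := by positivity
    have haij : a i < a j := ha hij
    have hcross : Gi * Fj < Gj * Fi := by
      rw [hai, haj, div_lt_div_iff₀ hFi0 hFj0] at haij
      linarith
    have hσw : σ w = (b * Gi + c2 * Gj) / (b * Fi + c2 * Fj) := by
      show (w.1 - v.1) / (Fc c w - Fc c v) = _
      rw [hw1, hwF]
    constructor
    · rw [hai, hσw, div_lt_div_iff₀ hFi0 hD]
      nlinarith [mul_lt_mul_of_pos_left hcross hcp]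
    · rw [haj, hσw, div_lt_div_iff₀ hD hFj0]
      nlinarith [mul_lt_mul_of_pos_left hcross hbp]
  -- pigeonhole over R.card + 1 adjacent triangles
  set k := R.card with hk
  have hidx1 : ∀ i : Fin (k + 1), i.1 < m := by intro i; omega
  have hidx2 : ∀ i : Fin (k + 1), i.1 + 1 < m := by intro i; omega
  by_cases hex : ∃ i : Fin (k + 1), ∀ w ∈ R,
      w ∉ convexHull ℝ ({v, e ⟨i.1, hidx1 i⟩, e ⟨i.1 + 1, hidx2 i⟩} : Set Pt)
  · obtain ⟨i, hi⟩ := hex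
    set i1 : Fin m := ⟨i.1, hidx1 i⟩
    set i2 : Fin m := ⟨i.1 + 1, hidx2 i⟩
    have hi12 : i1 < i2 := by rw [Fin.lt_def]; exact Nat.lt_succ_self _
    have hv1 : v ≠ e i1 := fun h => hQv (h ▸ he i1)
    have hv2 : v ≠ e i2 := fun h => hQv (h ▸ he i2)
    have h12 : e i1 ≠ e i2 := by
      intro h
      have := hσe i1
      rw [h, hσe i2] at this
      exact absurd this (ne_of_gt (ha hi12))
    exact ⟨v, hv, e i1, hQB (he i1), e i2, hQB (he i2), hv1, hv2, h12, hi⟩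
  · exfalso
    push_neg at hex
    choose g hgR hgmem using hex
    have hinj' : ∀ i j : Fin (k + 1), i.1 < j.1 → g i ≠ g j := by
      intro i j hij heq
      have h1 := (hkey ⟨i.1, hidx1 i⟩ ⟨i.1 + 1, hidx2 i⟩ (by simp [Fin.lt_def]) (g i) (hgR i)
        (hgmem i)).2
      have h2 := (hkey ⟨j.1, hidx1 j⟩ ⟨j.1 + 1, hidx2 j⟩ (by simp [Fin.lt_def]) (g j) (hgR j)
        (hgmem j)).1
      have hmono : a ⟨i.1 + 1, hidx2 i⟩ ≤ a ⟨j.1, hidx1 j⟩ := by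
        apply ha.monotone
        simp [Fin.le_def]
        omega
      rw [heq] at h1
      linarith
    have hcard : (Finset.univ : Finset (Fin (k + 1))).card ≤ R.card := by
      apply Finset.card_le_card_of_injOn g (fun i _ => hgR i)
      intro i _ j _ heq
      by_contra hne
      rcases lt_trichotomy i.1 j.1 with h | h | h
      · exact hinj' i j h heq
      · exact hne (Fin.ext h)
      · exact hinj' j i h heq.symm
    rw [Finset.card_univ, Fintype.card_fin] at hcard
    omega

lemma segment_avoid {B R : Finset Pt} (hd : Disjoint B R) (hgp : GenPos (B ∪ R))
    {p q : Pt} (hp : p ∈ B) (hq : q ∈ B) {r : Pt} (hr : r ∈ R)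
    (hmem : r ∈ convexHull ℝ ({p, q} : Set Pt)) : False := by
  have hrB : r ∉ B := fun h => (Finset.disjoint_left.1 hd h) hr
  by_cases hpq : p = q
  · subst hpq
    rw [Set.pair_eq_singleton, convexHull_singleton] at hmem
    exact hrB (hmem ▸ hp)
  · rw [convexHull_pair] at hmem
    obtain ⟨a, b, ha, hb, hab, habr⟩ := hmem
    have hsm : r - p = b • (q - p) := by
      have : a = 1 - b := by linarith
      subst this
      have := habr
      rw [← this]
      ext <;> simp [Prod.fst_sub, Prod.snd_sub] <;> ring
    have hcol := collinear_triple_of_smul hsm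
    exact hgp p (Finset.mem_union_left _ hp) q (Finset.mem_union_left _ hq) r
      (Finset.mem_union_right _ hr) hpq (fun h => hrB (h ▸ hp)) (fun h => hrB (h ▸ hq)) hcol

/-- Pairing lemma: cover blues by segments, (b+1)/2 of them. -/
lemma pairing : ∀ n (B R : Finset Pt), B.card = n → Disjoint B R → GenPos (B ∪ R) →
    ∃ T : Finset (Finset Pt),
      T.card ≤ (B.card + 1) / 2 ∧
      (∀ s ∈ T, s.Nonempty ∧ s.card ≤ 3) ∧
      (∀ p ∈ B, ∃ s ∈ T, p ∈ convexHull ℝ (↑s : Set Pt)) ∧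
      (∀ s ∈ T, ∀ r ∈ R, r ∉ convexHull ℝ (↑s : Set Pt)) := by
  intro n
  induction n using Nat.strong_induction_on with
  | _ n ih =>
    intro B R hcard hd hgp
    rcases Nat.lt_or_ge n 2 with hn | hn
    · -- B has 0 or 1 elements
      rcases Finset.eq_empty_or_nonempty B with rfl | ⟨p, hp⟩
      · exact ⟨∅, by simp⟩
      · have hB : B = {p} := by
          apply Finset.eq_singleton_iff_unique_mem.2
          refine ⟨hp, fun x hx => ?_⟩
          by_contra hne
          have : 2 ≤ B.card := Finset.one_lt_card.2 ⟨x, hx, p, hp, hne⟩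
          omega
        have hb1 : B.card = 1 := by rw [hB]; simp
        refine ⟨{{p}}, ?_, ?_, ?_, ?_⟩
        · simp [hb1]
        · intro s hs
          rw [Finset.mem_singleton] at hs
          subst hs
          exact ⟨⟨p, Finset.mem_singleton_self p⟩, by simp⟩
        · intro x hx
          rw [hB, Finset.mem_singleton] at hx
          refine ⟨({p} : Finset Pt), Finset.mem_singleton_self _, ?_⟩
          rw [hx]
          simp
        · intro s hs r hr hmem
          rw [Finset.mem_singleton] at hs
          subst hs
          simp only [Finset.coe_singleton, convexHull_singleton, Set.mem_singleton_iff] at hmem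
          subst hmem
          exact (Finset.disjoint_left.1 hd hp) hr
    · -- pick two points
      obtain ⟨p, hp, q, hq, hpq⟩ := Finset.one_lt_card.1 (by omega : 1 < B.card)
      set B' := (B.erase p).erase q with hB'
      have hB'sub : B' ⊆ B := Finset.Subset.trans (Finset.erase_subset _ _) (Finset.erase_subset _ _)
      have hqB' : q ∈ B.erase p := Finset.mem_erase.2 ⟨Ne.symm hpq, hq⟩
      have hB'card : B'.card = n - 2 := by
        rw [hB', Finset.card_erase_of_mem hqB', Finset.card_erase_of_mem hp, hcard]
        omega
      obtain ⟨T', hT'card, hT'sz, hT'cov, hT'avoid⟩ :=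
        ih (n - 2) (by omega) B' R hB'card
          (Finset.disjoint_of_subset_left hB'sub hd)
          (genPos_mono (Finset.union_subset_union hB'sub (Finset.Subset.refl _)) hgp)
      refine ⟨insert {p, q} T', ?_, ?_, ?_, ?_⟩
      · calc (insert {p, q} T').card ≤ T'.card + 1 := Finset.card_insert_le _ _
          _ ≤ (n - 2 + 1) / 2 + 1 := by omega
          _ ≤ (B.card + 1) / 2 := by rw [hcard]; omega
      · intro s hs
        rcases Finset.mem_insert.1 hs with rfl | hs'
        · exact ⟨⟨p, by simp⟩, by
            calc ({p, q} : Finset Pt).card ≤ ({q} : Finset Pt).card + 1 := Finset.card_insert_le _ _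
              _ ≤ 3 := by simp⟩
        · exact hT'sz s hs'
      · intro x hx
        by_cases hxB' : x ∈ B'
        · obtain ⟨s, hs, hmem⟩ := hT'cov x hxB'
          exact ⟨s, Finset.mem_insert_of_mem hs, hmem⟩
        · have : x = p ∨ x = q := by
            by_contra hne
            push_neg at hne
            exact hxB' (Finset.mem_erase.2 ⟨hne.2, Finset.mem_erase.2 ⟨hne.1, hx⟩⟩)
          refine ⟨{p, q}, Finset.mem_insert_self _ _, ?_⟩
          apply subset_convexHull
          rcases this with rfl | rfl <;> simp
      · intro s hs r hr hmem
        rcases Finset.mem_insert.1 hs with rfl | hs'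
        · have : (↑({p, q} : Finset Pt) : Set Pt) = ({p, q} : Set Pt) := by simp
          rw [this] at hmem
          exact segment_avoid hd hgp hp hq hr hmem
        · exact hT'avoid s hs' r hr hmem


lemma exists_c (B : Finset Pt) : ∃ c : ℝ, Set.InjOn (fun p => Fc c p) ↑B := by
  set bad : Set ℝ := ⋃ p ∈ B, ⋃ q ∈ B, {c : ℝ | p ≠ q ∧ Fc c p = Fc c q} with hbad
  have hfin : bad.Finite := by
    apply Set.Finite.biUnion B.finite_toSet
    intro p _
    apply Set.Finite.biUnion B.finite_toSet
    intro q _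
    apply Set.Subsingleton.finite
    intro c1 hc1 c2 hc2
    obtain ⟨hpq, h1⟩ := hc1
    obtain ⟨_, h2⟩ := hc2
    simp only [Fc_apply] at h1 h2
    by_cases hx : p.1 = q.1
    · exfalso
      apply hpq
      have : p.2 = q.2 := by rw [hx] at h1; linarith
      exact Prod.ext hx this
    · have : (c1 - c2) * (p.1 - q.1) = 0 := by linarith
      rcases mul_eq_zero.1 this with h | h
      · linarith
      · exfalso; apply hx; linarith
  obtain ⟨c, hc⟩ := hfin.infinite_compl.nonempty
  refine ⟨c, ?_⟩
  intro p hp q hq h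
  by_contra hne
  apply hc
  rw [hbad]
  apply Set.mem_biUnion hp
  apply Set.mem_biUnion hq
  exact ⟨hne, h⟩

lemma main_aux (c : ℝ) : ∀ t (B R : Finset Pt), Disjoint B R → GenPos (B ∪ R) →
    Set.InjOn (fun p => Fc c p) ↑B → R.card + 3 * t = B.card →
    ∃ T : Finset (Finset Pt),
      T.card ≤ (B.card - t + 1) / 2 ∧
      (∀ s ∈ T, s.Nonempty ∧ s.card ≤ 3) ∧
      (∀ p ∈ B, ∃ s ∈ T, p ∈ convexHull ℝ (↑s : Set Pt)) ∧
      (∀ s ∈ T, ∀ r ∈ R, r ∉ convexHull ℝ (↑s : Set Pt)) := by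
  intro t
  induction t with
  | zero =>
    intro B R hd hgp _ _
    obtain ⟨T, hT1, hT2, hT3, hT4⟩ := pairing B.card B R rfl hd hgp
    exact ⟨T, by omega, hT2, hT3, hT4⟩
  | succ t ih =>
    intro B R hd hgp hinj hcard
    obtain ⟨p, hp, q, hq, r0, hr0, hpq, hpr, hqr, havoid⟩ :=
      exists_good_triple c B R hd hgp hinj (by omega)
    set B' := ((B.erase p).erase q).erase r0 with hB'def
    have hB'sub : B' ⊆ B :=
      (Finset.erase_subset _ _).trans ((Finset.erase_subset _ _).trans (Finset.erase_subset _ _))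
    have hq1 : q ∈ B.erase p := Finset.mem_erase.2 ⟨Ne.symm hpq, hq⟩
    have hr1 : r0 ∈ (B.erase p).erase q :=
      Finset.mem_erase.2 ⟨Ne.symm hqr, Finset.mem_erase.2 ⟨Ne.symm hpr, hr0⟩⟩
    have hB'card : B'.card = B.card - 3 := by
      rw [hB'def, Finset.card_erase_of_mem hr1, Finset.card_erase_of_mem hq1,
        Finset.card_erase_of_mem hp]
      omega
    obtain ⟨T', hT'1, hT'2, hT'3, hT'4⟩ := ih B' R
      (Finset.disjoint_of_subset_left hB'sub hd)
      (genPos_mono (Finset.union_subset_union hB'sub (Finset.Subset.refl _)) hgp)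
      (hinj.mono (by exact_mod_cast hB'sub))
      (by omega)
    refine ⟨insert {p, q, r0} T', ?_, ?_, ?_, ?_⟩
    · have h1 := Finset.card_insert_le ({p, q, r0} : Finset Pt) T'
      omega
    · intro s hs
      rcases Finset.mem_insert.1 hs with rfl | hs'
      · refine ⟨⟨p, by simp⟩, ?_⟩
        have h2 := Finset.card_insert_le p ({q, r0} : Finset Pt)
        have h3 := Finset.card_insert_le q ({r0} : Finset Pt)
        simp only [Finset.card_singleton] at h3
        omega
      · exact hT'2 s hs'
    · intro x hx
      by_cases hxB' : x ∈ B'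
      · obtain ⟨s, hs, hmem⟩ := hT'3 x hxB'
        exact ⟨s, Finset.mem_insert_of_mem hs, hmem⟩
      · have hx3 : x = p ∨ x = q ∨ x = r0 := by
          by_contra hne
          push_neg at hne
          exact hxB' (Finset.mem_erase.2 ⟨hne.2.2,
            Finset.mem_erase.2 ⟨hne.2.1, Finset.mem_erase.2 ⟨hne.1, hx⟩⟩⟩)
        refine ⟨{p, q, r0}, Finset.mem_insert_self _ _, ?_⟩
        apply subset_convexHull
        rcases hx3 with rfl | rfl | rfl <;> simp
    · intro s hs w hw hmem
      rcases Finset.mem_insert.1 hs with rfl | hs'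
      · have hcoe : (↑({p, q, r0} : Finset Pt) : Set Pt) = ({p, q, r0} : Set Pt) := by simp
        rw [hcoe] at hmem
        exact havoid w hw hmem
      · exact hT'4 s hs' w hw hmem

end Stmt4Aux


/-- Given `b` blue and `b - 3t` red points in general position (`0 ≤ t ≤ b/3`), there is a set of
at most `⌈(b - t)/2⌉` (possibly degenerate) triangles covering all blue points and avoiding all
red points. -/
theorem stmt4 (B R : Finset Pt) (t : ℕ) (hdisj : Disjoint B R)
    (hgp : GenPos (B ∪ R)) (hcard : R.card + 3 * t = B.card) :
    ∃ T : Finset (Finset Pt),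
      (T.card : ℤ) ≤ ⌈((B.card : ℚ) - t) / 2⌉ ∧
      (∀ s ∈ T, s.Nonempty ∧ s.card ≤ 3) ∧
      (∀ p ∈ B, ∃ s ∈ T, p ∈ convexHull ℝ (↑s : Set Pt)) ∧
      (∀ s ∈ T, ∀ r ∈ R, r ∉ convexHull ℝ (↑s : Set Pt)) := by
  obtain ⟨c, hc⟩ := Stmt4Aux.exists_c B
  obtain ⟨T, hT1, hT2, hT3, hT4⟩ := Stmt4Aux.main_aux c t B R hdisj hgp hc hcard
  refine ⟨T, ?_, hT2, hT3, hT4⟩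
  have ht : t ≤ B.card := by omega
  have h1 : ((B.card : ℚ) - t) = ((B.card - t : ℕ) : ℚ) := by
    push_cast [Nat.cast_sub ht]
    ring
  rw [h1]
  set n := B.card - t with hn
  have h2 : (T.card : ℤ) ≤ (((n + 1) / 2 : ℕ) : ℤ) := by exact_mod_cast hT1
  refine h2.trans ?_
  rw [Int.le_ceil_iff]
  have h4 : 2 * ((n + 1) / 2) ≤ n + 1 := by omega
  have h5 : ((((n + 1) / 2 : ℕ) : ℚ)) ≤ ((n : ℚ) + 1) / 2 := by
    rw [le_div_iff₀ (by norm_num : (0:ℚ) < 2)]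
    have : (((n + 1) / 2 : ℕ) : ℚ) * 2 = ((2 * ((n + 1) / 2) : ℕ) : ℚ) := by push_cast; ring
    rw [this]
    exact_mod_cast h4
  have h6 : ((((n + 1) / 2 : ℕ) : ℤ) : ℚ) = (((n + 1) / 2 : ℕ) : ℚ) := by norm_cast
  rw [h6]
  linarith [h5]
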